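/- Define undirected trees F_1, F_2, ... by: F_1 is a path on k+1 vertices; F_{i+1} is obtained from F_i by choosing a leaf u and attaching two new paths, each on k new vertices, to u by one edge each. Then F_i has exactly k(2i−1)+1 vertices and exactly i+1 leaves, and the set of all leaves of F_i is a branching k-path vertex cover of F_i of size i+1. -/

import Mathlib

/-- A rooted directed forest on vertex type `V`, given by a parent map
(edges are oriented from parent to child, i.e. away from the roots),
with no directed cycles. A root is a vertex with no parent. -/
structure RDForest (V : Type) where
  parent : V → Option V
  acyclic : ∀ v : V, ¬ Relation.TransGen (fun a b => parent b = some a) v v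

namespace RDForest

variable {V : Type}

/-- Out-degree of a vertex: its number of children. -/
noncomputable def outDeg (F : RDForest V) (v : V) : ℕ :=
  Nat.card {w | F.parent w = some v}

/-- A leaf is a vertex of out-degree 0. -/
def IsLeaf (F : RDForest V) (v : V) : Prop := F.outDeg v = 0

/-- A branching vertex is a vertex of out-degree at least 2. -/
def IsBranching (F : RDForest V) (v : V) : Prop := 2 ≤ F.outDeg v

/-- `p 0, p 1, …, p (k-1)` is a directed path on `k` vertices
(each successive vertex is a child of the previous one). -/
def IsDPath (F : RDForest V) (k : ℕ) (p : ℕ → V) : Prop :=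
  ∀ i, i + 1 < k → F.parent (p (i + 1)) = some (p i)

/-- A branching `k`-path vertex cover of a rooted directed forest:
all leaves belong to `P`, and every directed path on `k` vertices contains
a branching vertex or a vertex of `P`. -/
def IsBPVC (F : RDForest V) (k : ℕ) (P : Set V) : Prop :=
  (∀ v, F.IsLeaf v → v ∈ P) ∧
  ∀ p : ℕ → V, F.IsDPath k p →
    (∃ i < k, F.IsBranching (p i)) ∨ (∃ i < k, p i ∈ P)

end RDForest

namespace SimpleGraph

variable {V : Type}

/-- Degree of a vertex in an undirected graph. -/
noncomputable def udeg (G : SimpleGraph V) (v : V) : ℕ := Nat.card {w | G.Adj v w}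

/-- `p 0, …, p (k-1)` is a path on `k` vertices: consecutive vertices
are adjacent and all `k` vertices are distinct. -/
def IsUPath (G : SimpleGraph V) (k : ℕ) (p : ℕ → V) : Prop :=
  (∀ i, i + 1 < k → G.Adj (p i) (p (i + 1))) ∧
  (∀ i j, i < k → j < k → p i = p j → i = j)

/-- A branching `k`-path vertex cover of an undirected graph: all vertices of
degree at most 1 belong to `P`, and every path on `k` vertices contains a vertex
of degree at least 3 (a branching vertex) or a vertex of `P`. -/
def IsBPVC (G : SimpleGraph V) (k : ℕ) (P : Set V) : Prop :=
  (∀ v, G.udeg v ≤ 1 → v ∈ P) ∧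
  ∀ p : ℕ → V, G.IsUPath k p →
    (∃ i < k, 3 ≤ G.udeg (p i)) ∨ (∃ i < k, p i ∈ P)

end SimpleGraph

/-- The extremal tree `F_i` for the undirected case: `F_1` is a path on `k+1`
vertices `0, 1, …, k`; `F_{j+1}` is obtained from `F_j` by attaching to its leaf
`(2j-1)k` two new paths on `k` new vertices each (consecutive-index paths, the
second one attached by the extra edge `{(2j-1)k, 2jk+1}`). -/
def specialTree (k i : ℕ) : SimpleGraph (Fin (k * (2 * i - 1) + 1)) :=
  SimpleGraph.fromRel (fun a b =>
    (b.1 = a.1 + 1 ∧ ¬(2 * k ≤ a.1 ∧ a.1 % (2 * k) = 0)) ∨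
    (∃ j, 1 ≤ j ∧ j < i ∧ a.1 = (2 * j - 1) * k ∧ b.1 = 2 * j * k + 1))

namespace BPVCaux

def nadj (k i a b : ℕ) : Prop :=
  (b = a + 1 ∧ ¬(2 * k ≤ a ∧ a % (2 * k) = 0)) ∨
  (∃ j, 1 ≤ j ∧ j < i ∧ a = (2 * j - 1) * k ∧ b = 2 * j * k + 1)

lemma k_le_jk {k j : ℕ} (hj : 1 ≤ j) : k ≤ 2*j*k :=
  le_trans (le_of_eq (one_mul k).symm) (Nat.mul_le_mul_right _ (by omega))

lemma two_k_le_jk {k j : ℕ} (hj : 1 ≤ j) : 2*k ≤ 2*j*k := by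
  calc 2*k = 2*1*k := by ring
  _ ≤ 2*j*k := Nat.mul_le_mul_right _ (by omega)

lemma odd_mul (j k : ℕ) : (2*j-1)*k = 2*j*k - k := by rw [Nat.sub_mul, one_mul]

lemma jk_mod (j k : ℕ) : 2*j*k % (2*k) = 0 := by
  rw [show 2*j*k = 2*k*j by ring, Nat.mul_mod_right]

lemma mul_ne_succ {k : ℕ} (hk : 2 ≤ k) (c d : ℕ) (h : c * k = d * k + 1) : False := by
  rcases le_or_gt c d with h' | h'
  · have := Nat.mul_le_mul_right k h'; omega
  · have : (d+1)*k ≤ c*k := Nat.mul_le_mul_right _ h'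
    rw [add_mul, one_mul] at this; omega

lemma mul_cancel {k : ℕ} (hk : 2 ≤ k) {c d : ℕ} (h : c * k = d * k) : c = d :=
  Nat.eq_of_mul_eq_mul_right (by omega) h

lemma cond_iff {k : ℕ} (hk : 2 ≤ k) (a : ℕ) :
    (2*k ≤ a ∧ a % (2*k) = 0) ↔ ∃ j, 1 ≤ j ∧ a = 2*j*k := by
  constructor
  · rintro ⟨h1, h2⟩
    obtain ⟨m, hm⟩ := Nat.dvd_of_mod_eq_zero h2
    refine ⟨m, ?_, by rw [hm]; ring⟩
    rcases Nat.eq_zero_or_pos m with rfl | h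
    · rw [hm] at h1; omega
    · exact h
  · rintro ⟨j, hj, rfl⟩
    exact ⟨two_k_le_jk hj, jk_mod j k⟩

lemma nadj_ne {k i a b : ℕ} (hk : 2 ≤ k) (h : nadj k i a b) : a ≠ b := by
  rcases h with ⟨h1, -⟩ | ⟨j, hj, -, h1, h2⟩
  · omega
  · have h3 := odd_mul j k
    have h4 := k_le_jk (k := k) hj
    obtain ⟨t, ht⟩ : ∃ t, 2*j*k = t := ⟨_, rfl⟩
    rw [ht] at h3 h4 h2
    omega

lemma adj_iff {k i : ℕ} (hk : 2 ≤ k) {x y : Fin (k*(2*i-1)+1)} :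
    (specialTree k i).Adj x y ↔ (nadj k i x.1 y.1 ∨ nadj k i y.1 x.1) := by
  rw [specialTree, SimpleGraph.fromRel_adj]
  constructor
  · rintro ⟨-, h⟩; exact h
  · intro h
    refine ⟨?_, h⟩
    intro hxy
    rcases h with h | h
    · exact nadj_ne hk h (by rw [hxy])
    · exact nadj_ne hk h (by rw [hxy])

def par (k a : ℕ) : ℕ := if 2*k ≤ a - 1 ∧ (a-1) % (2*k) = 0 then a - 1 - k else a - 1

lemma par_le (k a : ℕ) : par k a ≤ a - 1 := by unfold par; split <;> omega

lemma nadj_par {k i a b : ℕ} (hk : 2 ≤ k) (h : nadj k i a b) : a = par k b := by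
  rcases h with ⟨hb, hcond⟩ | ⟨j, hj, -, ha, hb⟩
  · have hb1 : b - 1 = a := by omega
    rw [par, hb1, if_neg hcond]
  · have hb1 : b - 1 = 2*j*k := by omega
    rw [par, hb1, if_pos ⟨two_k_le_jk hj, jk_mod j k⟩, ha, odd_mul]

lemma adj_par {k i : ℕ} (hk : 2 ≤ k) {x y : Fin (k*(2*i-1)+1)}
    (h : (specialTree k i).Adj x y) : x.1 = par k y.1 ∨ y.1 = par k x.1 := by
  rcases (adj_iff hk).1 h with h | h
  · exact Or.inl (nadj_par hk h)
  · exact Or.inr (nadj_par hk h)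

lemma nadj_par_edge {k i : ℕ} (hk : 2 ≤ k) (hi : 1 ≤ i) {a : ℕ}
    (ha0 : 1 ≤ a) (ha : a ≤ k*(2*i-1)) : nadj k i (par k a) a := by
  by_cases hc : 2*k ≤ a - 1 ∧ (a-1) % (2*k) = 0
  · obtain ⟨j, hj, hjk⟩ := (cond_iff hk _).1 hc
    right
    refine ⟨j, hj, ?_, ?_, by omega⟩
    · by_contra hji
      push_neg at hji
      have h1 : 2*i*k ≤ 2*j*k := Nat.mul_le_mul_right _ (by omega)
      have h2 : k*(2*i-1) = 2*i*k - k := by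
        rw [Nat.mul_comm, Nat.sub_mul, one_mul]
      have h3 := k_le_jk (k := k) hi
      obtain ⟨t, ht⟩ : ∃ t, 2*j*k = t := ⟨_, rfl⟩
      obtain ⟨s, hs⟩ : ∃ s, 2*i*k = s := ⟨_, rfl⟩
      rw [ht] at h1 hjk; rw [hs] at h1 h2 h3
      omega
    · rw [par, if_pos hc, hjk, odd_mul]
  · left
    refine ⟨?_, ?_⟩
    · rw [par, if_neg hc]; omega
    · rw [par, if_neg hc]
      intro h
      exact hc ⟨by omega, h.2⟩

lemma par_edge {k i : ℕ} (hk : 2 ≤ k) (hi : 1 ≤ i) {a : ℕ}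
    (ha0 : 1 ≤ a) (ha : a < k*(2*i-1)+1) :
    (specialTree k i).Adj ⟨par k a, by have := par_le k a; omega⟩ ⟨a, ha⟩ := by
  rw [adj_iff hk]
  exact Or.inl (nadj_par_edge hk hi ha0 (by omega))

lemma par_zero {k : ℕ} (hk : 2 ≤ k) : par k 0 = 0 := by
  have h : ¬(2*k ≤ 0-1 ∧ (0-1) % (2*k) = 0) := by rintro ⟨h, -⟩; omega
  rw [par, if_neg h]

/-- complete characterization of adjacency via the parent map -/
lemma adj_iff_par {k i : ℕ} (hk : 2 ≤ k) (hi : 1 ≤ i) {x y : Fin (k*(2*i-1)+1)} :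
    (specialTree k i).Adj x y ↔
      ((1 ≤ y.1 ∧ x.1 = par k y.1) ∨ (1 ≤ x.1 ∧ y.1 = par k x.1)) := by
  constructor
  · intro h
    rcases adj_par hk h with h' | h'
    · refine Or.inl ⟨?_, h'⟩
      by_contra hy
      push_neg at hy
      have hy0 : y.1 = 0 := by omega
      rw [hy0, par_zero hk] at h'
      exact h.ne (Fin.ext (by omega))
    · refine Or.inr ⟨?_, h'⟩
      by_contra hx
      push_neg at hx
      have hx0 : x.1 = 0 := by omega
      rw [hx0, par_zero hk] at h'
      exact h.ne (Fin.ext (by omega))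
  · rintro (⟨hy1, hxy⟩ | ⟨hx1, hyx⟩)
    · have h := par_edge hk hi hy1 y.2
      have hx : x = ⟨par k y.1, by have := par_le k y.1; omega⟩ := Fin.ext hxy
      rw [hx]
      convert h
    · have h := par_edge hk hi hx1 x.2
      have hy : y = ⟨par k x.1, by have := par_le k x.1; omega⟩ := Fin.ext hyx
      rw [hy]
      exact (by convert h : (specialTree k i).Adj _ x).symm

/-- solutions of `par k b = a` -/
lemma par_eq_iff {k b a : ℕ} (hb : 1 ≤ b) :
    par k b = a ↔ ((b = a + 1 ∧ ¬(2*k ≤ a ∧ a % (2*k) = 0)) ∨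
      (b = a + k + 1 ∧ (2*k ≤ a + k ∧ (a + k) % (2*k) = 0))) := by
  by_cases hc : 2*k ≤ b - 1 ∧ (b-1) % (2*k) = 0
  · rw [par, if_pos hc]
    constructor
    · intro h
      right
      have hb' : b = a + k + 1 := by omega
      refine ⟨hb', ?_⟩
      have : a + k = b - 1 := by omega
      rw [this]; exact hc
    · rintro (⟨h1, h2⟩ | ⟨h1, h2⟩)
      · exfalso; apply h2; rw [show a = b - 1 by omega]; exact hc
      · omega
  · rw [par, if_neg hc]
    constructor
    · intro h
      left
      refine ⟨by omega, ?_⟩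
      rw [show a = b - 1 by omega]; exact hc
    · rintro (⟨h1, h2⟩ | ⟨h1, h2⟩)
      · omega
      · exfalso; apply hc; rw [show b - 1 = a + k by omega]; exact h2

lemma cond_mod_k {k a : ℕ} (hk : 2 ≤ k) (h : 2*k ≤ a ∧ a % (2*k) = 0) : a % k = 0 := by
  obtain ⟨j, hj, rfl⟩ := (cond_iff hk a).1 h
  rw [show 2*j*k = (2*j)*k from rfl, Nat.mul_mod_left]

lemma not_cond_add_k {k a : ℕ} (hk : 2 ≤ k) (h : 2*k ≤ a ∧ a % (2*k) = 0) :
    ¬(2*k ≤ a + k ∧ (a + k) % (2*k) = 0) := by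
  obtain ⟨j, hj, rfl⟩ := (cond_iff hk a).1 h
  intro h'
  obtain ⟨j', hj', he⟩ := (cond_iff hk _).1 h'
  have : (2*j+1)*k = (2*j')*k := by rw [add_mul, one_mul]; exact he
  have := mul_cancel hk this
  omega

lemma not_cond_odd {k j : ℕ} (hk : 2 ≤ k) (hj : 1 ≤ j) :
    ¬(2*k ≤ (2*j-1)*k ∧ ((2*j-1)*k) % (2*k) = 0) := by
  intro h
  obtain ⟨j', hj', he⟩ := (cond_iff hk _).1 h
  have := mul_cancel hk (show (2*j-1)*k = (2*j')*k from he)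
  omega

lemma cond_odd_add {k j : ℕ} (hk : 2 ≤ k) (hj : 1 ≤ j) :
    2*k ≤ (2*j-1)*k + k ∧ ((2*j-1)*k + k) % (2*k) = 0 := by
  have h1 : (2*j-1)*k + k = 2*j*k := by
    have h2 := odd_mul j k
    have h3 := k_le_jk (k := k) hj
    omega
  rw [h1]
  exact ⟨two_k_le_jk hj, jk_mod j k⟩


section Degrees

variable {k i : ℕ}

/-- membership in the neighborhood, fully unfolded -/
lemma mem_nbhd (hk : 2 ≤ k) (hi : 1 ≤ i) (v w : Fin (k*(2*i-1)+1)) :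
    (specialTree k i).Adj v w ↔
      ((1 ≤ v.1 ∧ w.1 = par k v.1) ∨
       (1 ≤ w.1 ∧ ((w.1 = v.1 + 1 ∧ ¬(2*k ≤ v.1 ∧ v.1 % (2*k) = 0)) ∨
        (w.1 = v.1 + k + 1 ∧ (2*k ≤ v.1 + k ∧ (v.1 + k) % (2*k) = 0))))) := by
  rw [adj_iff_par hk hi]
  constructor
  · rintro (⟨h1, h2⟩ | ⟨h1, h2⟩)
    · exact Or.inr ⟨h1, (par_eq_iff h1).1 h2.symm⟩
    · exact Or.inl ⟨h1, h2⟩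
  · rintro (⟨h1, h2⟩ | ⟨h1, h2⟩)
    · exact Or.inr ⟨h1, h2⟩
    · exact Or.inl ⟨h1, ((par_eq_iff h1).2 h2).symm⟩

lemma udeg_zero (hk : 2 ≤ k) (hi : 1 ≤ i) (v : Fin (k*(2*i-1)+1)) (hv : v.1 = 0) :
    (specialTree k i).udeg v = 1 := by
  have hkn : k ≤ k*(2*i-1) := Nat.le_mul_of_pos_right k (by omega)
  have h1 : (1:ℕ) < k*(2*i-1)+1 := by omega
  have hset : {w | (specialTree k i).Adj v w} = {(⟨1, h1⟩ : Fin (k*(2*i-1)+1))} := by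
    ext w
    simp only [Set.mem_setOf_eq, Set.mem_singleton_iff, mem_nbhd hk hi]
    rw [hv]
    constructor
    · rintro (⟨h1', -⟩ | ⟨-, ⟨h2, -⟩ | ⟨-, h3, -⟩⟩)
      · omega
      · exact Fin.ext (by simpa using h2)
      · omega
    · rintro rfl
      exact Or.inr ⟨by simp, Or.inl ⟨by simp, fun h => by omega⟩⟩
  rw [SimpleGraph.udeg, hset, Nat.card_coe_set_eq, Set.ncard_singleton]

lemma udeg_cond (hk : 2 ≤ k) (hi : 1 ≤ i) (v : Fin (k*(2*i-1)+1))
    (hv : 2*k ≤ v.1 ∧ v.1 % (2*k) = 0) :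
    (specialTree k i).udeg v = 1 := by
  have hb : par k v.1 < k*(2*i-1)+1 := by have := par_le k v.1; omega
  have hset : {w | (specialTree k i).Adj v w} =
      {(⟨par k v.1, hb⟩ : Fin (k*(2*i-1)+1))} := by
    ext w
    simp only [Set.mem_setOf_eq, Set.mem_singleton_iff, mem_nbhd hk hi]
    constructor
    · rintro (⟨-, h2⟩ | ⟨-, ⟨-, h2⟩ | ⟨-, h3⟩⟩)
      · exact Fin.ext (by simpa using h2)
      · exact absurd hv h2
      · exact absurd h3 (not_cond_add_k hk hv)
    · rintro rfl
      exact Or.inl ⟨by omega, rfl⟩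
  rw [SimpleGraph.udeg, hset, Nat.card_coe_set_eq, Set.ncard_singleton]

lemma udeg_mid (hk : 2 ≤ k) (hi : 1 ≤ i) (v : Fin (k*(2*i-1)+1)) (hv : v.1 % k ≠ 0) :
    (specialTree k i).udeg v = 2 := by
  have hvpos : 1 ≤ v.1 := by
    rcases Nat.eq_zero_or_pos v.1 with h | h
    · rw [h] at hv; simp at hv
    · exact h
  have hvN : v.1 ≠ k*(2*i-1) := by
    intro h; apply hv; rw [h]; exact Nat.mul_mod_right k _
  have hb1 : v.1 + 1 < k*(2*i-1)+1 := by have := v.2; omega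
  have hb2 : par k v.1 < k*(2*i-1)+1 := by have := par_le k v.1; omega
  have hset : {w | (specialTree k i).Adj v w} =
      {(⟨par k v.1, hb2⟩ : Fin (k*(2*i-1)+1)), ⟨v.1 + 1, hb1⟩} := by
    ext w
    simp only [Set.mem_setOf_eq, Set.mem_insert_iff, Set.mem_singleton_iff, mem_nbhd hk hi]
    constructor
    · rintro (⟨-, h2⟩ | ⟨-, ⟨h2, -⟩ | ⟨-, h3⟩⟩)
      · exact Or.inl (Fin.ext (by simpa using h2))
      · exact Or.inr (Fin.ext (by simpa using h2))
      · exact absurd (by simpa [Nat.add_mod_right] using cond_mod_k hk h3) hv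
    · rintro (rfl | rfl)
      · exact Or.inl ⟨hvpos, rfl⟩
      · refine Or.inr ⟨by simp, Or.inl ⟨rfl, fun h => hv (cond_mod_k hk h)⟩⟩
  rw [SimpleGraph.udeg, hset, Nat.card_coe_set_eq]
  rw [Set.ncard_pair]
  intro h
  have := congrArg Fin.val h
  simp only at this
  have := par_le k v.1
  omega

lemma udeg_top (hk : 2 ≤ k) (hi : 1 ≤ i) (v : Fin (k*(2*i-1)+1))
    (hv : v.1 = k*(2*i-1)) :
    (specialTree k i).udeg v = 1 := by
  have hkn : k ≤ k*(2*i-1) := Nat.le_mul_of_pos_right k (by omega)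
  have hb : par k v.1 < k*(2*i-1)+1 := by have := par_le k v.1; omega
  have hset : {w | (specialTree k i).Adj v w} =
      {(⟨par k v.1, hb⟩ : Fin (k*(2*i-1)+1))} := by
    ext w
    simp only [Set.mem_setOf_eq, Set.mem_singleton_iff, mem_nbhd hk hi]
    constructor
    · rintro (⟨-, h2⟩ | ⟨-, ⟨h2, -⟩ | ⟨h2, -⟩⟩)
      · exact Fin.ext (by simpa using h2)
      · exfalso; have := w.2; omega
      · exfalso; have := w.2; omega
    · rintro rfl
      exact Or.inl ⟨by omega, rfl⟩
  rw [SimpleGraph.udeg, hset, Nat.card_coe_set_eq, Set.ncard_singleton]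

lemma udeg_odd (hk : 2 ≤ k) (hi : 1 ≤ i) {j : ℕ} (hj : 1 ≤ j) (hji : j < i)
    (v : Fin (k*(2*i-1)+1)) (hv : v.1 = (2*j-1)*k) :
    (specialTree k i).udeg v = 3 := by
  have hvpos : 1 ≤ v.1 := by
    rw [hv]
    calc 1 ≤ k := by omega
    _ = 1*k := (one_mul k).symm
    _ ≤ (2*j-1)*k := Nat.mul_le_mul_right _ (by omega)
  -- bound : v.1 + k + 1 ≤ k*(2*i-1)
  have hbound : v.1 + k + 1 ≤ k*(2*i-1) := by
    have h1 : (2*j+2)*k ≤ (2*i)*k := Nat.mul_le_mul_right _ (by omega)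
    rw [add_mul] at h1
    have h2 : k*(2*i-1) = 2*i*k - k := by rw [Nat.mul_comm, Nat.sub_mul, one_mul]
    have h3 := odd_mul j k
    have h4 := k_le_jk (k := k) hj
    obtain ⟨t, ht⟩ : ∃ t, 2*j*k = t := ⟨_, rfl⟩
    obtain ⟨s, hs⟩ : ∃ s, 2*i*k = s := ⟨_, rfl⟩
    rw [ht] at h1 h3 h4; rw [hs] at h1 h2
    omega
  have hb1 : v.1 + 1 < k*(2*i-1)+1 := by omega
  have hb3 : v.1 + k + 1 < k*(2*i-1)+1 := by omega
  have hb2 : par k v.1 < k*(2*i-1)+1 := by have := par_le k v.1; omega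
  have hset : {w | (specialTree k i).Adj v w} =
      {(⟨par k v.1, hb2⟩ : Fin (k*(2*i-1)+1)), ⟨v.1 + 1, hb1⟩, ⟨v.1 + k + 1, hb3⟩} := by
    ext w
    simp only [Set.mem_setOf_eq, Set.mem_insert_iff, Set.mem_singleton_iff, mem_nbhd hk hi]
    constructor
    · rintro (⟨-, h2⟩ | ⟨-, ⟨h2, -⟩ | ⟨h2, -⟩⟩)
      · exact Or.inl (Fin.ext (by simpa using h2))
      · exact Or.inr (Or.inl (Fin.ext (by simpa using h2)))
      · exact Or.inr (Or.inr (Fin.ext (by simpa using h2)))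
    · rintro (rfl | rfl | rfl)
      · exact Or.inl ⟨hvpos, rfl⟩
      · refine Or.inr ⟨by simp, Or.inl ⟨rfl, by rw [hv]; exact not_cond_odd hk hj⟩⟩
      · refine Or.inr ⟨by simp, Or.inr ⟨rfl, by rw [hv]; exact cond_odd_add hk hj⟩⟩
  rw [SimpleGraph.udeg, hset, Nat.card_coe_set_eq]
  have hple := par_le k v.1
  have hne1 : (⟨par k v.1, hb2⟩ : Fin (k*(2*i-1)+1)) ≠ ⟨v.1 + 1, hb1⟩ := by
    intro h; have := congrArg Fin.val h; simp only at this; omega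
  have hne2 : (⟨par k v.1, hb2⟩ : Fin (k*(2*i-1)+1)) ≠ ⟨v.1 + k + 1, hb3⟩ := by
    intro h; have := congrArg Fin.val h; simp only at this; omega
  have hne3 : (⟨v.1 + 1, hb1⟩ : Fin (k*(2*i-1)+1)) ≠ ⟨v.1 + k + 1, hb3⟩ := by
    intro h; have := congrArg Fin.val h; simp only at this; omega
  rw [Set.ncard_insert_of_notMem (by simp [hne1, hne2]) (Set.toFinite _),
    Set.ncard_pair hne3]

lemma vertex_cases (hk : 2 ≤ k) (hi : 1 ≤ i) (v : Fin (k*(2*i-1)+1)) :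
    v.1 % k ≠ 0 ∨ v.1 = 0 ∨ (2*k ≤ v.1 ∧ v.1 % (2*k) = 0) ∨ v.1 = k*(2*i-1) ∨
    (∃ j, 1 ≤ j ∧ j < i ∧ v.1 = (2*j-1)*k) := by
  by_cases hm : v.1 % k = 0
  · right
    obtain ⟨c, hc⟩ : ∃ c, v.1 = k*c :=
      ⟨v.1/k, (Nat.mul_div_cancel' (Nat.dvd_of_mod_eq_zero hm)).symm⟩
    have hcle : c ≤ 2*i-1 := by
      have h1 : k*c ≤ k*(2*i-1) := by rw [← hc]; exact Nat.lt_succ_iff.1 v.2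
      exact Nat.le_of_mul_le_mul_left h1 (by omega)
    rcases Nat.even_or_odd c with ⟨m, hm2⟩ | ⟨m, hm2⟩
    · rcases Nat.eq_zero_or_pos m with rfl | hmpos
      · left; rw [hc, hm2]; simp
      · right; left
        have : v.1 = 2*m*k := by rw [hc, hm2]; ring
        rw [this]
        exact ⟨two_k_le_jk hmpos, jk_mod m k⟩
    · by_cases hji : m+1 < i
      · right; right; right
        exact ⟨m+1, by omega, hji, by rw [hc, mul_comm]; exact congrArg (· * k) (by omega)⟩
      · right; right; left
        rw [hc]; exact congrArg (k * ·) (by omega)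
  · left; exact hm

lemma udeg_le_one_iff (hk : 2 ≤ k) (hi : 1 ≤ i) (v : Fin (k*(2*i-1)+1)) :
    (specialTree k i).udeg v ≤ 1 ↔
      (v.1 = 0 ∨ (2*k ≤ v.1 ∧ v.1 % (2*k) = 0) ∨ v.1 = k*(2*i-1)) := by
  rcases vertex_cases hk hi v with h | h | h | h | ⟨j, hj, hji, h⟩
  · rw [udeg_mid hk hi v h]
    constructor
    · intro h2; omega
    · rintro (h0 | hc | hN)
      · exact absurd (by rw [h0] : v.1 % k = 0 % k) (by simpa using h)
      · exact absurd (cond_mod_k hk hc) h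
      · exact absurd (by rw [hN]; exact Nat.mul_mod_right k _) h
  · rw [udeg_zero hk hi v h]; simp [h]
  · rw [udeg_cond hk hi v h]; simp [h]
  · rw [udeg_top hk hi v h]; simp [h]
  · rw [udeg_odd hk hi hj hji v h]
    constructor
    · intro h2; omega
    · rintro (h0 | hc | hN)
      · rw [h] at h0
        have : 1*k ≤ (2*j-1)*k := Nat.mul_le_mul_right _ (by omega)
        omega
      · rw [h] at hc; exact absurd hc (not_cond_odd hk hj)
      · rw [h, mul_comm] at hN
        have := Nat.eq_of_mul_eq_mul_left (show 0 < k by omega) hN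
        omega

lemma udeg_ne_two_of_mod (hk : 2 ≤ k) (hi : 1 ≤ i) (v : Fin (k*(2*i-1)+1))
    (h : v.1 % k = 0) : (specialTree k i).udeg v ≠ 2 := by
  rcases vertex_cases hk hi v with h' | h' | h' | h' | ⟨j, hj, hji, h'⟩
  · exact absurd h h'
  · rw [udeg_zero hk hi v h']; omega
  · rw [udeg_cond hk hi v h']; omega
  · rw [udeg_top hk hi v h']; omega
  · rw [udeg_odd hk hi hj hji v h']; omega

lemma step (hk : 2 ≤ k) (hi : 1 ≤ i) {x y : Fin (k*(2*i-1)+1)}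
    (h : (specialTree k i).Adj x y) (hx : x.1 % k ≠ 0) (hy : y.1 % k ≠ 0) :
    y.1 = x.1 + 1 ∨ x.1 = y.1 + 1 := by
  have main : ∀ a b : ℕ, 1 ≤ b → a = par k b → a % k ≠ 0 → b = a + 1 := by
    intro a b hb hab ha
    by_cases hc : 2*k ≤ b - 1 ∧ (b-1) % (2*k) = 0
    · exfalso
      obtain ⟨j, hj, hjy⟩ := (cond_iff hk _).1 hc
      rw [par, if_pos hc] at hab
      apply ha
      have h3 := odd_mul j k
      have ha2 : a = (2*j-1)*k := by
        obtain ⟨t, ht⟩ : ∃ t, 2*j*k = t := ⟨_, rfl⟩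
        rw [ht] at h3 hjy
        omega
      rw [ha2, show (2*j-1)*k % k = 0 from Nat.mul_mod_left _ _]
    · rw [par, if_neg hc] at hab
      omega
  rcases (adj_iff_par hk hi).1 h with ⟨h1, h2⟩ | ⟨h1, h2⟩
  · exact Or.inl (main _ _ h1 h2 hx)
  · exact Or.inr (main _ _ h1 h2 hy)

/-- the enumeration of the leaves -/
def leafFun (k i : ℕ) : Fin (i+1) → Fin (k*(2*i-1)+1) :=
  fun j => ⟨min (2*j.1*k) (k*(2*i-1)), Nat.lt_succ_of_le (min_le_right _ _)⟩

lemma N_eq (k i : ℕ) : k*(2*i-1) = 2*i*k - k := by rw [Nat.mul_comm, Nat.sub_mul, one_mul]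

lemma leaf_min_eq {j : ℕ} (hk : 2 ≤ k) (hji : j < i) : min (2*j*k) (k*(2*i-1)) = 2*j*k := by
  apply min_eq_left
  have h1 : (2*j+2)*k ≤ 2*i*k := Nat.mul_le_mul_right _ (by omega)
  rw [add_mul] at h1
  have h2 := N_eq k i
  obtain ⟨t, ht⟩ : ∃ t, 2*j*k = t := ⟨_, rfl⟩
  obtain ⟨s, hs⟩ : ∃ s, 2*i*k = s := ⟨_, rfl⟩
  rw [ht] at h1 ⊢; rw [hs] at h1 h2
  omega

lemma leaf_min_top (hk : 2 ≤ k) (hi : 1 ≤ i) :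
    min (2*i*k) (k*(2*i-1)) = k*(2*i-1) := by
  apply min_eq_right
  have h2 := N_eq k i
  have h3 := k_le_jk (k := k) hi
  omega

lemma leafFun_inj (hk : 2 ≤ k) (hi : 1 ≤ i) : Function.Injective (leafFun k i) := by
  have mono : ∀ a b : Fin (i+1), a < b → (leafFun k i a).1 < (leafFun k i b).1 := by
    intro a b hab
    have hab' : a.1 < b.1 := hab
    have hai : a.1 < i := by have := b.2; omega
    show min (2*a.1*k) (k*(2*i-1)) < min (2*b.1*k) (k*(2*i-1))
    rw [leaf_min_eq hk hai]
    by_cases hbi : b.1 < i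
    · rw [leaf_min_eq hk hbi]
      have h1 : (2*a.1+1)*k ≤ 2*b.1*k := Nat.mul_le_mul_right _ (by omega)
      rw [add_mul, one_mul] at h1
      obtain ⟨t, ht⟩ : ∃ t, 2*a.1*k = t := ⟨_, rfl⟩
      obtain ⟨s, hs⟩ : ∃ s, 2*b.1*k = s := ⟨_, rfl⟩
      rw [ht] at h1 ⊢; rw [hs] at h1 ⊢
      omega
    · have hbi' : b.1 = i := by have := b.2; omega
      rw [hbi', leaf_min_top hk hi]
      have h1 : (2*a.1+2)*k ≤ 2*i*k := Nat.mul_le_mul_right _ (by omega)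
      rw [add_mul] at h1
      have h2 := N_eq k i
      obtain ⟨t, ht⟩ : ∃ t, 2*a.1*k = t := ⟨_, rfl⟩
      obtain ⟨s, hs⟩ : ∃ s, 2*i*k = s := ⟨_, rfl⟩
      rw [ht] at h1 ⊢; rw [hs] at h1 h2
      omega
  intro a b hab
  rcases lt_trichotomy a b with h | h | h
  · exact absurd (congrArg Fin.val hab) (by have := mono a b h; omega)
  · exact h
  · exact absurd (congrArg Fin.val hab) (by have := mono b a h; omega)

lemma leafset_eq (hk : 2 ≤ k) (hi : 1 ≤ i) :
    {x : Fin (k*(2*i-1)+1) | (specialTree k i).udeg x ≤ 1} =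
      Set.range (leafFun k i) := by
  ext x
  simp only [Set.mem_setOf_eq, Set.mem_range, udeg_le_one_iff hk hi]
  constructor
  · rintro (h | h | h)
    · refine ⟨⟨0, by omega⟩, Fin.ext ?_⟩
      show min (2*0*k) (k*(2*i-1)) = x.1
      rw [h]; simp
    · obtain ⟨j, hj, hjv⟩ := (cond_iff hk _).1 h
      have hji : j < i := by
        have hxN : x.1 ≤ k*(2*i-1) := Nat.lt_succ_iff.1 x.2
        by_contra hji'
        push_neg at hji'
        have h1 : 2*i*k ≤ 2*j*k := Nat.mul_le_mul_right _ (by omega)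
        have h2 := N_eq k i
        have h3 := k_le_jk (k := k) hi
        obtain ⟨t, ht⟩ : ∃ t, 2*j*k = t := ⟨_, rfl⟩
        obtain ⟨s, hs⟩ : ∃ s, 2*i*k = s := ⟨_, rfl⟩
        rw [ht] at h1 hjv; rw [hs] at h1 h2 h3
        omega
      refine ⟨⟨j, by omega⟩, Fin.ext ?_⟩
      show min (2*j*k) (k*(2*i-1)) = x.1
      rw [leaf_min_eq hk hji, hjv]
    · refine ⟨⟨i, by omega⟩, Fin.ext ?_⟩
      show min (2*i*k) (k*(2*i-1)) = x.1
      rw [leaf_min_top hk hi, h]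
  · rintro ⟨j, rfl⟩
    rcases Nat.eq_zero_or_pos j.1 with hj0 | hj0
    · left
      show min (2*j.1*k) (k*(2*i-1)) = 0
      rw [hj0]; simp
    · by_cases hji : j.1 < i
      · right; left
        have : (leafFun k i j).1 = 2*j.1*k := leaf_min_eq hk hji
        rw [this]
        exact ⟨two_k_le_jk hj0, jk_mod _ k⟩
      · right; right
        have hji' : j.1 = i := by have := j.2; omega
        show min (2*j.1*k) (k*(2*i-1)) = k*(2*i-1)
        rw [hji']
        exact leaf_min_top hk hi

lemma leafset_card (hk : 2 ≤ k) (hi : 1 ≤ i) :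
    Nat.card {x : Fin (k*(2*i-1)+1) | (specialTree k i).udeg x ≤ 1} = i + 1 := by
  rw [leafset_eq hk hi, Nat.card_range_of_injective (leafFun_inj hk hi),
    Nat.card_eq_fintype_card, Fintype.card_fin]

lemma bpvc (hk : 2 ≤ k) (hi : 1 ≤ i) :
    (specialTree k i).IsBPVC k {x | (specialTree k i).udeg x ≤ 1} := by
  refine ⟨fun v h => h, ?_⟩
  intro p hp
  by_contra hcon
  push_neg at hcon
  obtain ⟨h3, hP⟩ := hcon
  have hmod : ∀ j, j < k → (p j).1 % k ≠ 0 := by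
    intro j hj hm
    have hd2 : (specialTree k i).udeg (p j) = 2 := by
      have ha := h3 j hj
      have hb := hP j hj
      simp only [Set.mem_setOf_eq, not_le] at hb
      omega
    exact udeg_ne_two_of_mod hk hi _ hm hd2
  have hstep : ∀ j, j + 1 < k →
      ((p (j+1)).1 = (p j).1 + 1 ∨ (p j).1 = (p (j+1)).1 + 1) :=
    fun j hj => step hk hi (hp.1 j hj) (hmod j (by omega)) (hmod (j+1) hj)
  obtain ⟨r, hr⟩ : ∃ r, (p 0).1 % k = r := ⟨_, rfl⟩
  have hrne : r ≠ 0 := hr ▸ hmod 0 (by omega)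
  have hrlt : r < k := hr ▸ Nat.mod_lt _ (by omega)
  obtain ⟨q, hq⟩ : ∃ q, k * q + r = (p 0).1 := ⟨(p 0).1 / k, by rw [← hr, Nat.div_add_mod]⟩
  obtain ⟨t, ht⟩ : ∃ t, k * q = t := ⟨_, rfl⟩
  have hmul : ∀ s, (k * s) % k = 0 := fun s => Nat.mul_mod_right k s
  rcases hstep 0 (by omega) with hd | hd
  all_goals rw [Nat.zero_add] at hd
  · -- ascending
    have key : ∀ j, j < k → (p j).1 = (p 0).1 + j := by
      intro j
      induction j using Nat.strong_induction_on with
      | _ j IH =>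
        intro hjk
        rcases j with _ | _ | m
        · simp
        · simpa using hd
        · show (p (m+2)).1 = (p 0).1 + (m+2)
          have h1 := IH (m+1) (by omega) (by omega)
          have h0 := IH m (by omega) (by omega)
          rcases hstep (m+1) hjk with h' | h'
          all_goals simp only [show m+1+1 = m+2 from rfl] at h'
          · omega
          · exfalso
            have he : p (m+2) = p m := Fin.ext (by omega)
            have := hp.2 (m+2) m hjk (by omega) he
            omega
    have hpm := key (k - r) (by omega)
    apply hmod (k - r) (by omega)
    have h2 : (p (k-r)).1 = k * (q + 1) := by
      rw [Nat.mul_succ, ht]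
      omega
    rw [h2]
    exact hmul (q+1)
  · -- descending
    have key : ∀ j, j < k → (p j).1 + j = (p 0).1 := by
      intro j
      induction j using Nat.strong_induction_on with
      | _ j IH =>
        intro hjk
        rcases j with _ | _ | m
        · simp
        · show (p 1).1 + 1 = (p 0).1; omega
        · have h1 := IH (m+1) (by omega) (by omega)
          have h0 := IH m (by omega) (by omega)
          show (p (m+2)).1 + (m+2) = (p 0).1
          rcases hstep (m+1) hjk with h' | h'
          all_goals simp only [show m+1+1 = m+2 from rfl] at h'
          · exfalso
            have he : p (m+2) = p m := Fin.ext (by omega)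
            have := hp.2 (m+2) m hjk (by omega) he
            omega
          · omega
    have hpm := key r (by omega)
    apply hmod r (by omega)
    have h2 : (p r).1 = k * q := by omega
    rw [h2]
    exact hmul q

end Degrees

section Tree

/-- abstract acyclicity criterion: a parent map that decreases a linear order -/
lemma isAcyclic_of_par {V : Type} [LinearOrder V] (G : SimpleGraph V)
    (par : V → V)
    (hpar : ∀ x y, G.Adj x y → x = par y ∨ y = par x)
    (hlt : ∀ x y, G.Adj x y → x = par y → x < y) :
    G.IsAcyclic := by
  intro v c hc
  have hne : c.support.toFinset.Nonempty := by
    simp [List.toFinset_nonempty_iff, SimpleGraph.Walk.support_ne_nil]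
  set m := c.support.toFinset.max' hne with hm
  have hmem : m ∈ c.support := List.mem_toFinset.1 (c.support.toFinset.max'_mem hne)
  have hmax : ∀ x ∈ c.support, x ≤ m := fun x hx =>
    c.support.toFinset.le_max' x (List.mem_toFinset.2 hx)
  have hc' := hc.rotate hmem
  set c' := c.rotate m hmem with hc'def
  have hmax' : ∀ x ∈ c'.support, x ≤ m := by
    intro x hx
    rw [SimpleGraph.Walk.support_eq_cons, List.mem_cons] at hx
    rcases hx with rfl | hx
    · exact le_refl _
    · exact hmax x (List.mem_of_mem_tail ((c.support_rotate m hmem).mem_iff.1 hx))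
  clear_value c'
  cases c' with
  | nil => exact hc'.not_of_nil
  | @cons _ u _ h q =>
    rw [SimpleGraph.Walk.cons_isCycle_iff] at hc'
    obtain ⟨hq, hedge⟩ := hc'
    obtain ⟨w, h2, q2, hq2⟩ := SimpleGraph.Walk.exists_eq_cons_of_ne h.ne q.reverse
    have hu : u ∈ (SimpleGraph.Walk.cons h q).support := by
      rw [SimpleGraph.Walk.support_cons]
      exact List.mem_cons_of_mem _ q.start_mem_support
    have hw : w ∈ (SimpleGraph.Walk.cons h q).support := by
      rw [SimpleGraph.Walk.support_cons]
      refine List.mem_cons_of_mem _ ?_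
      have hws : w ∈ q.reverse.support := by
        rw [hq2, SimpleGraph.Walk.support_cons]
        exact List.mem_cons_of_mem _ q2.start_mem_support
      rw [SimpleGraph.Walk.support_reverse] at hws
      exact List.mem_reverse.1 hws
    have humax := hmax' u hu
    have hwmax := hmax' w hw
    have hupar : u = par m := by
      rcases hpar m u h with h' | h'
      · exact absurd (hlt m u h h') (not_lt.2 humax)
      · exact h'
    have hwpar : w = par m := by
      rcases hpar m w h2 with h' | h'
      · exact absurd (hlt m w h2 h') (not_lt.2 hwmax)
      · exact h'
    have huw : u = w := hupar.trans hwpar.symm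
    apply hedge
    have hmem2 : s(m, w) ∈ q.reverse.edges := by
      rw [hq2, SimpleGraph.Walk.edges_cons]; exact List.mem_cons_self
    rw [SimpleGraph.Walk.edges_reverse, List.mem_reverse] at hmem2
    have he : s(m, u) = s(m, w) := by rw [huw]
    rw [he]
    exact hmem2

variable {k i : ℕ}

lemma connected (hk : 2 ≤ k) (hi : 1 ≤ i) : (specialTree k i).Connected := by
  have h0 : (0:ℕ) < k*(2*i-1)+1 := Nat.succ_pos _
  have key : ∀ a (ha : a < k*(2*i-1)+1),
      (specialTree k i).Reachable ⟨0, h0⟩ ⟨a, ha⟩ := by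
    intro a
    induction a using Nat.strong_induction_on with
    | _ a IH =>
      intro ha
      rcases Nat.eq_zero_or_pos a with rfl | hpos
      · exact SimpleGraph.Reachable.refl _
      · have hp := par_le k a
        have h1 := IH (par k a) (by omega) (by omega)
        exact h1.trans (par_edge hk hi hpos ha).reachable
  constructor
  intro x y
  have hx := key x.1 x.2
  have hy := key y.1 y.2
  simp only [Fin.eta] at hx hy
  exact hx.symm.trans hy

lemma acyclic (hk : 2 ≤ k) (hi : 1 ≤ i) : (specialTree k i).IsAcyclic := by
  apply isAcyclic_of_par (specialTree k i)
    (fun x => ⟨par k x.1, by have := par_le k x.1; have := x.2; omega⟩)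
  · intro x y h
    rcases adj_par hk h with h' | h'
    · exact Or.inl (Fin.ext h')
    · exact Or.inr (Fin.ext h')
  · intro x y h hxy
    have hv : x.1 = par k y.1 := congrArg Fin.val hxy
    have hple := par_le k y.1
    rcases Nat.eq_zero_or_pos y.1 with h0 | h0
    · exfalso
      apply h.ne
      apply Fin.ext
      rw [hv, h0, par_zero hk, ← h0]
    · show x.1 < y.1
      omega

lemma isTree (hk : 2 ≤ k) (hi : 1 ≤ i) : (specialTree k i).IsTree :=
  ⟨connected hk hi, acyclic hk hi⟩

end Tree

end BPVCaux

theorem stmt14 (k i : ℕ) (hk : 2 ≤ k) (hi : 1 ≤ i) :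
    (specialTree k i).IsTree ∧
    Nat.card (Fin (k * (2 * i - 1) + 1)) = k * (2 * i - 1) + 1 ∧
    Nat.card {x | (specialTree k i).udeg x ≤ 1} = i + 1 ∧
    (specialTree k i).IsBPVC k {x | (specialTree k i).udeg x ≤ 1} ∧
    ({x | (specialTree k i).udeg x ≤ 1} : Set (Fin (k * (2 * i - 1) + 1))).ncard
      = i + 1 := by
  refine ⟨BPVCaux.isTree hk hi, by simp, BPVCaux.leafset_card hk hi,
    BPVCaux.bpvc hk hi, ?_⟩
  rw [← Nat.card_coe_set_eq]
  exact BPVCaux.leafset_card hk hi
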